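/- arXiv:1103.5227 — 3 statements merged into one kernel-verified Lean document; each statement's English description precedes it below -/
import Mathlib

section
/- As formal power series, ∏_{n≥1} (1−x^{2n})⁵ / ((1−x^n)² (1−x^{4n})²) = 1 + 2 Σ_{n≥1} x^{n²}. -/
open PowerSeries

open Finset

noncomputable def cb : ℕ → ℕ → PowerSeries ℚ
  | 0, r => if r = 0 then 1 else 0
  | (N+1), r => cb N r + if r = 0 then 0 else X ^ (2*(N+1-r)) * cb N (r-1)

lemma cb_zero (N : ℕ) : cb N 0 = 1 := by induction N with
  | zero => simp [cb]
  | succ N ih => simp [cb, ih]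

lemma cb_of_lt : ∀ N r : ℕ, N < r → cb N r = 0 := by
  intro N
  induction N with
  | zero => intro r h; simp [cb]; omega
  | succ N ih => intro r h
                 match r, h with
                 | (s+1), h => simp [cb, ih (s+1) (by omega), ih s (by omega)]

lemma gauss (x y : ℚ⟦X⟧) : ∀ N : ℕ, ∏ k ∈ range N, (x + y * X ^ (2*k)) =
    ∑ r ∈ range (N+1), cb N r * X ^ (r*(r-1)) * x ^ (N-r) * y ^ r := by
  intro N
  induction N with
  | zero => simp [cb]
  | succ N ih =>
    rw [prod_range_succ, ih]
    have split : ∀ r ∈ range (N+2), cb (N+1) r * X ^ (r*(r-1)) * x ^ (N+1-r) * y ^ r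
        = cb N r * X ^ (r*(r-1)) * x ^ (N+1-r) * y ^ r
          + (if r = 0 then 0 else X ^ (2*(N+1-r)) * cb N (r-1)) * X ^ (r*(r-1)) * x ^ (N+1-r) * y ^ r := by
      intro r _; rw [show cb (N+1) r = cb N r + if r = 0 then 0 else X ^ (2*(N+1-r)) * cb N (r-1) from rfl]
      ring
    rw [sum_congr rfl split, sum_add_distrib]
    have S1 : ∑ r ∈ range (N+2), cb N r * X ^ (r*(r-1)) * x ^ (N+1-r) * y ^ r
        = (∑ r ∈ range (N+1), cb N r * X ^ (r*(r-1)) * x ^ (N-r) * y ^ r) * x := by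
      rw [sum_range_succ, cb_of_lt N (N+1) (by omega), sum_mul]
      simp only [zero_mul, mul_zero, add_zero]
      refine sum_congr rfl fun r hr => ?_
      rw [mem_range] at hr
      rw [show N+1-r = (N-r)+1 by omega, pow_succ]
      ring
    have S2 : ∑ r ∈ range (N+2), (if r = 0 then 0 else X ^ (2*(N+1-r)) * cb N (r-1)) * X ^ (r*(r-1)) * x ^ (N+1-r) * y ^ r
        = (∑ r ∈ range (N+1), cb N r * X ^ (r*(r-1)) * x ^ (N-r) * y ^ r) * (y * X ^ (2*N)) := by
      have hss := Finset.sum_range_succ' (fun r => (if r = 0 then 0 else X ^ (2*(N+1-r)) * cb N (r-1)) * X ^ (r*(r-1)) * x ^ (N+1-r) * y ^ r) (N+1)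
      rw [hss]
      rw [Finset.sum_mul]
      simp only [↓reduceIte, Nat.succ_ne_zero, zero_mul, add_zero, Nat.add_sub_cancel, ite_false]
      refine sum_congr rfl fun s hs => ?_
      rw [mem_range] at hs
      have he : 2*(N-s) + (s+1)*s = 2*N + s*(s-1) := by
        cases s with
        | zero => simp
        | succ t => simp only [Nat.add_sub_cancel]; zify [show t+1 ≤ N by omega]; ring
      have key : (X:ℚ⟦X⟧)^(2*(N-s)) * X^((s+1)*s) = X^(2*N) * X^(s*(s-1)) := by
        rw [← pow_add, ← pow_add, he]
      rw [show N+1-(s+1) = N-s by omega,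
        show (X:ℚ⟦X⟧) ^ (2*(N-s)) * cb N s * X ^ ((s+1)*s) * x ^ (N-s) * y ^ (s+1)
          = (X^(2*(N-s)) * X^((s+1)*s)) * cb N s * x^(N-s) * y^(s+1) from by ring, key]
      ring
    rw [S1, S2, ← mul_add]

noncomputable def Aa (a M : ℕ) : PowerSeries ℚ := ∏ k ∈ Icc 1 M, (1 - X ^ (a*k))

lemma Aa_succ (a M : ℕ) : Aa a (M+1) = Aa a M * (1 - X ^ (a*(M+1))) := by
  unfold Aa; rw [← Finset.prod_Icc_succ_top (by omega : 1 ≤ M+1)]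

-- fact_cb : key product formula for Gaussian binomials
lemma fact_cb : ∀ N r : ℕ, r ≤ N → Aa 2 (N - r) * cb N r = ∏ i ∈ Icc (r+1) N, (1 - X ^ (2*i)) := by
  intro N
  induction N with
  | zero => intro r h; interval_cases r; simp [Aa, cb]
  | succ N ih =>
    intro r h
    rcases Nat.eq_zero_or_pos r with rfl | hr
    · rw [cb_zero]; simp only [Nat.sub_zero, mul_one]; rfl
    rcases eq_or_lt_of_le h with rfl | hlt
    · -- r = N+1
      have h0 : cb N N = 1 := by
        have := ih N le_rfl
        simpa [Aa] using this
      simp [cb, Nat.ne_of_gt hr, cb_of_lt N (N+1) (by omega), h0, Nat.sub_self]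
      simp [Aa]
    · -- 1 ≤ r ≤ N
      have hrN : r ≤ N := by omega
      have e1 : N + 1 - r = (N - r) + 1 := by omega
      rw [show cb (N+1) r = cb N r + if r = 0 then 0 else X ^ (2*(N+1-r)) * cb N (r-1) from rfl,
        if_neg (Nat.ne_of_gt hr), e1, Aa_succ]
      have hIr : Icc r N = insert r (Icc (r+1) N) := by
        ext i; simp [Finset.mem_Icc, Finset.mem_insert]; omega
      have h2 : Aa 2 (N - (r-1)) * cb N (r-1) = ∏ i ∈ Icc r N, (1 - X ^ (2*i)) := by
        have := ih (r-1) (by omega)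
        rwa [show (r-1)+1 = r by omega] at this
      have h3 : Aa 2 ((N-r)+1) * cb N (r-1) = (1 - X^(2*r)) * ∏ i ∈ Icc (r+1) N, (1 - X ^ (2*i)) := by
        rw [show (N-r)+1 = N - (r-1) by omega, h2, hIr, Finset.prod_insert (by simp)]
      rw [Finset.prod_Icc_succ_top (show r+1 ≤ N+1 by omega)]
      have h4 := ih r hrN
      calc Aa 2 (N - r) * (1 - X ^ (2*((N-r)+1))) * (cb N r + X ^ (2*((N-r)+1)) * cb N (r-1))
          = (1 - X ^ (2*((N-r)+1))) * (Aa 2 (N-r) * cb N r)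
            + X ^ (2*((N-r)+1)) * (Aa 2 (N-r) * (1 - X ^ (2*((N-r)+1))) * cb N (r-1)) := by ring
        _ = (1 - X ^ (2*((N-r)+1))) * (∏ i ∈ Icc (r+1) N, (1 - X ^ (2*i)))
            + X ^ (2*((N-r)+1)) * ((1 - X^(2*r)) * ∏ i ∈ Icc (r+1) N, (1 - X ^ (2*i))) := by
            rw [h4, ← Aa_succ, h3]
        _ = (1 - X ^ (2*((N-r)+1)) * X ^ (2*r)) * ∏ i ∈ Icc (r+1) N, (1 - X ^ (2*i)) := by ring
        _ = (∏ i ∈ Icc (r+1) N, (1 - X ^ (2*i))) * (1 - X ^ (2*(N+1))) := by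
            rw [← pow_add, show 2*((N-r)+1) + 2*r = 2*(N+1) by omega]; ring

lemma cc_one_sub (e : ℕ) (he : 1 ≤ e) : constantCoeff (R := ℚ) (1 - X ^ e) = 1 := by
  simp [map_pow, zero_pow (by omega : e ≠ 0)]

lemma Aa_cc (a M : ℕ) (ha : 1 ≤ a) : constantCoeff (R := ℚ) (Aa a M) = 1 := by
  unfold Aa
  rw [map_prod]
  rw [Finset.prod_eq_one]
  intro k hk
  exact cc_one_sub _ (by rw [Finset.mem_Icc] at hk; nlinarith)

lemma Aa_ne_zero (a M : ℕ) (ha : 1 ≤ a) : Aa a M ≠ 0 := by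
  intro h
  have := Aa_cc a M ha
  rw [h, map_zero] at this
  exact zero_ne_one this

lemma Aa_split {m n : ℕ} (h : m ≤ n) : Aa 2 n = Aa 2 m * ∏ i ∈ Icc (m+1) n, (1 - X ^ (2*i)) := by
  unfold Aa
  rw [show Icc 1 n = Ioc 0 n from Finset.Icc_add_one_left_eq_Ioc 0 n,
    show Icc 1 m = Ioc 0 m from Finset.Icc_add_one_left_eq_Ioc 0 m,
    show Icc (m+1) n = Ioc m n from Finset.Icc_add_one_left_eq_Ioc m n,
    Finset.prod_Ioc_consecutive _ (Nat.zero_le m) h]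

lemma factS (N r : ℕ) (h : r ≤ N) : Aa 2 r * Aa 2 (N-r) * cb N r = Aa 2 N := by
  rw [mul_assoc, fact_cb N r h, ← Aa_split (by omega : r ≤ N)]

lemma cb_symm (N r : ℕ) (h : r ≤ N) : cb N r = cb N (N - r) := by
  have h1 := factS N r h
  have h2 := factS N (N-r) (by omega)
  rw [show N - (N-r) = r by omega] at h2
  have h3 : Aa 2 r * Aa 2 (N-r) * cb N r = Aa 2 r * Aa 2 (N-r) * cb N (N-r) := by
    rw [h1, ← h2]; ring
  exact mul_left_cancel₀ (mul_ne_zero (Aa_ne_zero 2 r (by omega)) (Aa_ne_zero 2 (N-r) (by omega))) h3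

lemma prod_sub_one_dvd (S : Finset ℕ) (d : ℕ) (u : ℕ → ℚ⟦X⟧) (h : ∀ i ∈ S, (X:ℚ⟦X⟧)^d ∣ u i) :
    (X:ℚ⟦X⟧)^d ∣ (∏ i ∈ S, (1 + u i)) - 1 := by
  classical
  induction S using Finset.induction_on with
  | empty => simp
  | insert a s hx ih =>
    rw [Finset.prod_insert hx]
    have h1 : (X:ℚ⟦X⟧)^d ∣ (∏ i ∈ s, (1 + u i)) - 1 := ih (fun i hi => h i (Finset.mem_insert_of_mem hi))
    have h2 : (X:ℚ⟦X⟧)^d ∣ u a := h a (Finset.mem_insert_self a s)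
    have : (1 + u a) * (∏ i ∈ s, (1 + u i)) - 1
        = ((∏ i ∈ s, (1 + u i)) - 1) + u a * (∏ i ∈ s, (1 + u i)) := by ring
    rw [this]
    exact dvd_add h1 (h2.mul_right _)
noncomputable def Od (n : ℕ) : PowerSeries ℚ := ∏ k ∈ range n, (1 + X ^ (2*k+1))

def er (n r : ℕ) : ℕ := (r-n)*(r-n) + (n-r)*(n-r)

lemma sum_two_mul (n : ℕ) : ∑ k ∈ range n, 2*k = n*(n-1) := by
  have h := Finset.sum_range_id_mul_two n
  rw [← h, Finset.sum_mul]
  exact Finset.sum_congr rfl (fun k _ => by ring)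

lemma lhs_split (n : ℕ) (hn : 1 ≤ n) :
    ∏ k ∈ range (2*n), ((X:ℚ⟦X⟧)^(2*n-1) + 1 * X^(2*k))
      = X^(n*(n-1) + n*(2*n-1)) * (Od n)^2 := by
  have hsplit := Finset.prod_range_add (fun k => (X:ℚ⟦X⟧)^(2*n-1) + 1*X^(2*k)) n n
  rw [show n+n = 2*n by ring] at hsplit
  have h1 : ∏ k ∈ range n, ((X:ℚ⟦X⟧)^(2*n-1) + 1 * X^(2*k))
      = X^(n*(n-1)) * Od n := by
    have e1 : ∀ k ∈ range n, ((X:ℚ⟦X⟧)^(2*n-1) + 1 * X^(2*k))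
        = X^(2*k) * (1 + X^(2*(n-1-k)+1)) := by
      intro k hk; rw [mem_range] at hk
      rw [one_mul, show 2*n-1 = 2*k + (2*(n-1-k)+1) by omega, pow_add]
      ring
    rw [Finset.prod_congr rfl e1, Finset.prod_mul_distrib, Finset.prod_pow_eq_pow_sum,
      sum_two_mul]
    congr 1
    exact Finset.prod_range_reflect (fun k => 1 + (X:ℚ⟦X⟧)^(2*k+1)) n
  have h2 : ∏ k ∈ range n, ((X:ℚ⟦X⟧)^(2*n-1) + 1 * X^(2*(n+k)))
      = X^(n*(2*n-1)) * Od n := by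
    have e2 : ∀ k ∈ range n, ((X:ℚ⟦X⟧)^(2*n-1) + 1 * X^(2*(n+k)))
        = X^(2*n-1) * (1 + X^(2*k+1)) := by
      intro k hk
      rw [one_mul, show 2*(n+k) = (2*n-1) + (2*k+1) by omega, pow_add]
      ring
    rw [Finset.prod_congr rfl e2, Finset.prod_mul_distrib, Finset.prod_const,
      Finset.card_range, ← pow_mul, show (2*n-1)*n = n*(2*n-1) by ring]
    rfl
  rw [hsplit, h1, h2, pow_add]
  ring

lemma exp_id (n r : ℕ) (hn : 1 ≤ n) (hr : r ≤ 2*n) :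
    r*(r-1) + (2*n-1)*(2*n-r) = (n*(n-1) + n*(2*n-1)) + er n r := by
  unfold er
  rcases Nat.eq_zero_or_pos r with rfl | hr1
  · simp only [Nat.zero_sub, Nat.sub_zero]
    zify [show 1 ≤ n from hn, show 1 ≤ 2*n by omega]; ring
  rcases le_total n r with h | h
  · obtain ⟨j, rfl⟩ : ∃ j, r = n + j := ⟨r - n, by omega⟩
    rw [show n + j - n = j by omega, show n - (n+j) = 0 by omega]
    zify [show 1 ≤ n + j by omega, show n + j ≤ 2*n by omega, show 1 ≤ n from hn,
      show 1 ≤ 2*n by omega]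
    ring
  · obtain ⟨j, rfl⟩ : ∃ j, n = r + j := ⟨n - r, by omega⟩
    rw [show r - (r+j) = 0 by omega, show r + j - r = j by omega]
    zify [show 1 ≤ r from hr1, show 1 ≤ r + j by omega, show r ≤ 2*(r+j) by omega,
      show 1 ≤ 2*(r+j) by omega]
    ring

lemma jacobi_sq (n : ℕ) (hn : 1 ≤ n) :
    (Od n)^2 = ∑ r ∈ range (2*n+1), cb (2*n) r * X^(er n r) := by
  have hg := gauss ((X:ℚ⟦X⟧)^(2*n-1)) 1 (2*n)
  rw [lhs_split n hn] at hg
  have hr : ∑ r ∈ range (2*n+1), cb (2*n) r * X ^ (r*(r-1)) * ((X:ℚ⟦X⟧)^(2*n-1)) ^ (2*n-r) * 1 ^ r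
      = X^(n*(n-1) + n*(2*n-1)) * ∑ r ∈ range (2*n+1), cb (2*n) r * X^(er n r) := by
    rw [Finset.mul_sum]
    refine Finset.sum_congr rfl fun r hr => ?_
    rw [mem_range] at hr
    rw [one_pow, mul_one, ← pow_mul, mul_assoc, ← pow_add,
      show r*(r-1) + (2*n-1)*(2*n-r) = (n*(n-1) + n*(2*n-1)) + er n r from
        exp_id n r hn (by omega), pow_add]
    ring
  rw [hr] at hg
  exact mul_left_cancel₀ (pow_ne_zero _ X_ne_zero) hg
lemma prod_one_sub_dvd (a b d : ℕ) (h : ∀ i ∈ Icc a b, d ≤ 2*i) :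
    (X:ℚ⟦X⟧)^d ∣ (∏ i ∈ Icc a b, (1 - X^(2*i))) - 1 := by
  have : ∏ i ∈ Icc a b, ((1:ℚ⟦X⟧) - X^(2*i)) = ∏ i ∈ Icc a b, (1 + (-(X^(2*i)))) := by
    refine Finset.prod_congr rfl fun i _ => ?_; ring
  rw [this]
  exact prod_sub_one_dvd _ d _ (fun i hi => (dvd_neg).mpr (pow_dvd_pow X (h i hi)))

lemma term_prod (n r : ℕ) (h1 : n ≤ r) (h2 : r ≤ 2*n) :
    Aa 2 n * cb (2*n) r
      = (∏ i ∈ Icc (2*n-r+1) n, (1 - X^(2*i))) * ∏ i ∈ Icc (r+1) (2*n), (1 - X^(2*i)) := by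
  rw [Aa_split (show 2*n - r ≤ n by omega), mul_comm (Aa 2 (2*n-r)), mul_assoc,
    fact_cb (2*n) r h2]

lemma er_eq_of_ge {n r : ℕ} (h : n ≤ r) : er n r = (r-n)*(r-n) := by
  unfold er; rw [show n - r = 0 by omega]; ring

lemma er_symm (n r : ℕ) (h : r ≤ 2*n) : er n r = er n (2*n - r) := by
  unfold er
  rcases le_total n r with h1 | h1
  · rw [show n - r = 0 by omega, show 2*n - r - n = 0 by omega,
      show n - (2*n - r) = r - n by omega]; ring
  · rw [show r - n = 0 by omega, show n - (2*n - r) = 0 by omega,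
      show 2*n - r - n = n - r by omega]; ring

lemma coeff_term_aux (n r : ℕ) (hn : 1 ≤ n) (h1 : n ≤ r) (h2 : r ≤ 2*n) :
    (coeff (R := ℚ) n) (Aa 2 n * (cb (2*n) r * X^(er n r))) = if er n r = n then 1 else 0 := by
  obtain ⟨j, rfl⟩ : ∃ j, r = n + j := ⟨r - n, by omega⟩
  have he : er n (n+j) = j*j := by rw [er_eq_of_ge h1, show n + j - n = j by omega]
  have hd : (X:ℚ⟦X⟧)^(2*(2*n-(n+j))+2) ∣
      ((∏ i ∈ Icc (2*n-(n+j)+1) n, (1 - X^(2*i))) * ∏ i ∈ Icc ((n+j)+1) (2*n), (1 - X^(2*i))) - 1 := by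
    have d1 := prod_one_sub_dvd (2*n-(n+j)+1) n (2*(2*n-(n+j))+2)
      (fun i hi => by rw [mem_Icc] at hi; omega)
    have d2 := prod_one_sub_dvd ((n+j)+1) (2*n) (2*(2*n-(n+j))+2)
      (fun i hi => by rw [mem_Icc] at hi; omega)
    have : ((∏ i ∈ Icc (2*n-(n+j)+1) n, (1 - X^(2*i))) * ∏ i ∈ Icc ((n+j)+1) (2*n), (1 - (X:ℚ⟦X⟧)^(2*i))) - 1
        = ((∏ i ∈ Icc (2*n-(n+j)+1) n, (1 - X^(2*i))) - 1) * (∏ i ∈ Icc ((n+j)+1) (2*n), (1 - X^(2*i)))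
          + ((∏ i ∈ Icc ((n+j)+1) (2*n), (1 - X^(2*i))) - 1) := by ring
    rw [this]
    exact dvd_add (d1.mul_right _) d2
  obtain ⟨g, hg⟩ := hd
  have hF : (∏ i ∈ Icc (2*n-(n+j)+1) n, ((1:ℚ⟦X⟧) - X^(2*i))) * ∏ i ∈ Icc ((n+j)+1) (2*n), (1 - X^(2*i))
      = X^(2*(2*n-(n+j))+2) * g + 1 := by
    rw [← hg]; ring
  rw [← mul_assoc, term_prod n (n+j) h1 h2, hF, he]
  rw [add_mul, one_mul, map_add]
  have hz : (coeff (R := ℚ) n) (X^(2*(2*n-(n+j))+2) * g * X^(j*j)) = 0 := by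
    have hdvd : (X:ℚ⟦X⟧)^(n+1) ∣ X^(2*(2*n-(n+j))+2) * g * X^(j*j) := by
      have hle : n + 1 ≤ 2*(2*n-(n+j))+2 + j*j := by
        have hj : j ≤ n := by omega
        zify [hj, show n + j ≤ 2*n by omega]
        nlinarith [sq_nonneg ((j:ℤ) - 1)]
      calc (X:ℚ⟦X⟧)^(n+1) ∣ X^(2*(2*n-(n+j))+2 + j*j) := pow_dvd_pow X hle
        _ = X^(2*(2*n-(n+j))+2) * X^(j*j) := pow_add X _ _
        _ ∣ X^(2*(2*n-(n+j))+2) * g * X^(j*j) := ⟨g, by ring⟩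
    exact X_pow_dvd_iff.mp hdvd n (by omega)
  rw [hz, zero_add, coeff_X_pow]
  by_cases hcase : j*j = n
  · rw [if_pos hcase, if_pos hcase.symm]
  · rw [if_neg hcase, if_neg (fun hh => hcase hh.symm)]

lemma coeff_term (n r : ℕ) (hn : 1 ≤ n) (hr : r ≤ 2*n) :
    (coeff (R := ℚ) n) (Aa 2 n * (cb (2*n) r * X^(er n r))) = if er n r = n then 1 else 0 := by
  rcases le_total n r with h | h
  · exact coeff_term_aux n r hn h hr
  · rw [cb_symm (2*n) r (by omega), er_symm n r hr]
    exact coeff_term_aux n (2*n - r) hn (by omega) (by omega)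

lemma theta_coeff (n : ℕ) (hn : 1 ≤ n) :
    (coeff (R := ℚ) n) (Aa 2 n * (Od n)^2) = if IsSquare n then 2 else 0 := by
  classical
  rw [jacobi_sq n hn, Finset.mul_sum, map_sum,
    Finset.sum_congr rfl (fun r hr => coeff_term n r hn (by rw [mem_range] at hr; omega))]
  by_cases hs : IsSquare n
  · obtain ⟨t, ht⟩ := hs
    have ht1 : 1 ≤ t := by rcases Nat.eq_zero_or_pos t with rfl | h; · omega
                           · exact h
    have htn : t ≤ n := by nlinarith
    rw [if_pos ⟨t, ht⟩, Finset.sum_boole]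
    have hfil : (range (2*n+1)).filter (fun r => er n r = n) = {n-t, n+t} := by
      ext r
      simp only [mem_filter, mem_range, mem_insert, mem_singleton]
      constructor
      · rintro ⟨hr, he⟩
        rcases le_total n r with h | h
        · right
          rw [er_eq_of_ge h] at he
          have := (mul_self_inj (Nat.zero_le (r-n)) (Nat.zero_le t)).mp (by rw [he, ht])
          omega
        · left
          rw [er_symm n r (by omega), er_eq_of_ge (by omega : n ≤ 2*n - r)] at he
          have := (mul_self_inj (Nat.zero_le (2*n-r-n)) (Nat.zero_le t)).mp (by rw [he, ht])
          omega
      · rintro (rfl | rfl)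
        · constructor
          · omega
          · rw [er_symm n (n-t) (by omega), er_eq_of_ge (by omega : n ≤ 2*n - (n-t)),
              show 2*n - (n-t) - n = t by omega, ← ht]
        · constructor
          · omega
          · rw [er_eq_of_ge (by omega : n ≤ n+t), show n + t - n = t by omega, ← ht]
    rw [hfil, show ({n-t, n+t} : Finset ℕ).card = 2 from by
      rw [Finset.card_insert_of_notMem (by simp; omega), Finset.card_singleton]]
    norm_num
  · rw [if_neg hs]
    refine Finset.sum_eq_zero fun r hr => ?_
    rw [mem_range] at hr
    rw [if_neg]
    intro he
    apply hs
    rcases le_total n r with h | h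
    · rw [er_eq_of_ge h] at he
      exact ⟨r - n, he.symm⟩
    · rw [er_symm n r (by omega), er_eq_of_ge (by omega : n ≤ 2*n - r)] at he
      exact ⟨2*n - r - n, he.symm⟩
noncomputable def On (M : ℕ) : PowerSeries ℚ := ∏ k ∈ Icc 1 M, (1 + X ^ k)
noncomputable def Bb (M : ℕ) : PowerSeries ℚ := ∏ k ∈ Icc 1 M, (1 - X ^ (4*k-2))
noncomputable def Cc (M : ℕ) : PowerSeries ℚ := ∏ k ∈ Icc 1 M, (1 - X ^ (2*k-1))
noncomputable def OdI (M : ℕ) : PowerSeries ℚ := ∏ k ∈ Icc 1 M, (1 + X ^ (2*k-1))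
noncomputable def En (n : ℕ) : PowerSeries ℚ := ∏ k ∈ Icc (n+1) (2*n), (1 + X ^ k)

lemma OdI_eq_Od (M : ℕ) : OdI M = Od M := by
  induction M with
  | zero => simp [OdI, Od]
  | succ M ih =>
    unfold OdI Od
    rw [Finset.prod_Icc_succ_top (by omega : 1 ≤ M+1), Finset.prod_range_succ,
      show 2*(M+1)-1 = 2*M+1 by omega]
    unfold OdI Od at ih
    rw [ih]

lemma onA (M : ℕ) : Aa 1 M * On M = Aa 2 M := by
  unfold Aa On
  rw [← Finset.prod_mul_distrib]
  refine Finset.prod_congr rfl fun k _ => ?_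
  rw [one_mul, show 2*k = k + k by ring, pow_add]
  ring

lemma evenSplit (M : ℕ) : Aa 2 (2*M) = Aa 4 M * Bb M := by
  induction M with
  | zero => simp [Aa, Bb]
  | succ M ih =>
    rw [show 2*(M+1) = (2*M+1)+1 by omega, Aa_succ, Aa_succ, Aa_succ]
    unfold Bb
    rw [Finset.prod_Icc_succ_top (by omega : 1 ≤ M+1)]
    unfold Bb at ih
    rw [ih, show 2*(2*M+1) = 4*(M+1)-2 by omega, show 2*(2*M+1+1) = 4*(M+1) by omega]
    ring

lemma oddSplit (M : ℕ) : Aa 1 (2*M) = Aa 2 M * Cc M := by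
  induction M with
  | zero => simp [Aa, Cc]
  | succ M ih =>
    rw [show 2*(M+1) = (2*M+1)+1 by omega, Aa_succ, Aa_succ, Aa_succ]
    unfold Cc
    rw [Finset.prod_Icc_succ_top (by omega : 1 ≤ M+1)]
    unfold Cc at ih
    rw [ih, show 1*(2*M+1) = 2*(M+1)-1 by omega, show 1*(2*M+1+1) = 2*(M+1) by omega]
    ring

lemma BOC (M : ℕ) : Bb M = OdI M * Cc M := by
  unfold Bb OdI Cc
  rw [← Finset.prod_mul_distrib]
  refine Finset.prod_congr rfl fun k hk => ?_
  rw [mem_Icc] at hk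
  rw [show 4*k-2 = (2*k-1) + (2*k-1) by omega, pow_add]
  ring

lemma OnE (n : ℕ) : On (2*n) = On n * En n := by
  unfold On En
  rw [show Icc 1 (2*n) = Ioc 0 (2*n) from Finset.Icc_add_one_left_eq_Ioc 0 (2*n),
    show Icc 1 n = Ioc 0 n from Finset.Icc_add_one_left_eq_Ioc 0 n,
    show Icc (n+1) (2*n) = Ioc n (2*n) from Finset.Icc_add_one_left_eq_Ioc n (2*n),
    Finset.prod_Ioc_consecutive _ (Nat.zero_le n) (by omega : n ≤ 2*n)]

lemma Cc_ne_zero (M : ℕ) : Cc M ≠ 0 := by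
  have h : constantCoeff (R := ℚ) (Cc M) = 1 := by
    unfold Cc
    rw [map_prod, Finset.prod_eq_one]
    intro k hk
    rw [mem_Icc] at hk
    exact cc_one_sub _ (by omega)
  intro hz; rw [hz, map_zero] at h; exact zero_ne_one h

lemma keyA (n : ℕ) : Aa 1 n * Aa 2 (2*n) = Aa 2 n * En n * Aa 1 (2*n) := by
  calc Aa 1 n * Aa 2 (2*n) = Aa 1 n * (Aa 1 (2*n) * On (2*n)) := by rw [onA (2*n)]
    _ = Aa 1 n * (Aa 1 (2*n) * (On n * En n)) := by rw [OnE]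
    _ = (Aa 1 n * On n) * En n * Aa 1 (2*n) := by ring
    _ = Aa 2 n * En n * Aa 1 (2*n) := by rw [onA n]

lemma bigK (n : ℕ) :
    Aa 2 n * (OdI n)^2 * (Aa 1 n)^2 * (Aa 4 n)^2 = (Aa 2 n)^5 * (En n)^2 := by
  apply mul_right_cancel₀ (b := (Cc n)^2 * (Aa 2 n)^2)
    (mul_ne_zero (pow_ne_zero 2 (Cc_ne_zero n)) (pow_ne_zero 2 (Aa_ne_zero 2 n (by omega))))
  calc Aa 2 n * (OdI n)^2 * (Aa 1 n)^2 * (Aa 4 n)^2 * ((Cc n)^2 * (Aa 2 n)^2)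
      = (Aa 2 n)^3 * (Aa 1 n)^2 * (OdI n * Cc n)^2 * (Aa 4 n)^2 := by ring
    _ = (Aa 2 n)^3 * (Aa 1 n)^2 * (Aa 4 n * Bb n)^2 := by rw [← BOC]; ring
    _ = (Aa 2 n)^3 * (Aa 1 n * Aa 2 (2*n))^2 := by rw [← evenSplit]; ring
    _ = (Aa 2 n)^3 * (Aa 2 n * En n * Aa 1 (2*n))^2 := by rw [keyA]
    _ = (Aa 2 n)^3 * (Aa 2 n * En n * (Aa 2 n * Cc n))^2 := by rw [← oddSplit]
    _ = (Aa 2 n)^5 * (En n)^2 * ((Cc n)^2 * (Aa 2 n)^2) := by ring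
lemma P_clear (n : ℕ) :
    (∏ k ∈ Finset.Icc 1 n,
        (1 - X ^ (2 * k)) ^ 5 * (((1 - X ^ k) ^ 2 * (1 - (X:ℚ⟦X⟧) ^ (4 * k)) ^ 2)⁻¹))
      * ((Aa 1 n)^2 * (Aa 4 n)^2) = (Aa 2 n)^5 := by
  have hA1 : (Aa 1 n)^2 * (Aa 4 n)^2 = ∏ k ∈ Icc 1 n, ((1 - X ^ k) ^ 2 * (1 - (X:ℚ⟦X⟧) ^ (4 * k)) ^ 2) := by
    unfold Aa
    rw [Finset.prod_mul_distrib, ← Finset.prod_pow, ← Finset.prod_pow]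
    congr 1
    refine Finset.prod_congr rfl fun k _ => by rw [one_mul]
  rw [hA1, ← Finset.prod_mul_distrib]
  have : ∀ k ∈ Icc 1 n,
      (1 - X ^ (2 * k)) ^ 5 * (((1 - X ^ k) ^ 2 * (1 - (X:ℚ⟦X⟧) ^ (4 * k)) ^ 2)⁻¹)
        * ((1 - X ^ k) ^ 2 * (1 - X ^ (4 * k)) ^ 2) = (1 - X ^ (2 * k)) ^ 5 := by
    intro k hk
    rw [mem_Icc] at hk
    rw [mul_assoc, PowerSeries.inv_mul_cancel _ ?_, mul_one]
    rw [map_mul, map_pow, map_pow, cc_one_sub k (by omega), cc_one_sub (4*k) (by omega)]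
    norm_num
  rw [Finset.prod_congr rfl this, Finset.prod_pow]
  rfl

lemma T_eq_P (n : ℕ) :
    Aa 2 n * (OdI n)^2 =
      (∏ k ∈ Finset.Icc 1 n,
        (1 - X ^ (2 * k)) ^ 5 * (((1 - X ^ k) ^ 2 * (1 - (X:ℚ⟦X⟧) ^ (4 * k)) ^ 2)⁻¹))
      * (En n)^2 := by
  apply mul_right_cancel₀ (b := (Aa 1 n)^2 * (Aa 4 n)^2)
    (mul_ne_zero (pow_ne_zero 2 (Aa_ne_zero 1 n le_rfl)) (pow_ne_zero 2 (Aa_ne_zero 4 n (by omega))))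
  calc Aa 2 n * (OdI n)^2 * ((Aa 1 n)^2 * (Aa 4 n)^2)
      = Aa 2 n * (OdI n)^2 * (Aa 1 n)^2 * (Aa 4 n)^2 := by ring
    _ = (Aa 2 n)^5 * (En n)^2 := bigK n
    _ = (∏ k ∈ Finset.Icc 1 n,
          (1 - X ^ (2 * k)) ^ 5 * (((1 - X ^ k) ^ 2 * (1 - (X:ℚ⟦X⟧) ^ (4 * k)) ^ 2)⁻¹))
        * ((Aa 1 n)^2 * (Aa 4 n)^2) * (En n)^2 := by rw [P_clear]
    _ = _ := by ring

lemma En_sq_dvd (n : ℕ) : (X:ℚ⟦X⟧)^(n+1) ∣ (En n)^2 - 1 := by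
  have h1 : (X:ℚ⟦X⟧)^(n+1) ∣ En n - 1 := by
    unfold En
    exact prod_sub_one_dvd _ (n+1) _ (fun i hi => pow_dvd_pow X (by rw [mem_Icc] at hi; omega))
  have : (En n)^2 - 1 = (En n - 1) * (En n + 1) := by ring
  rw [this]
  exact h1.mul_right _


/- Since the k-th factor of the infinite product is ≡ 1 (mod x^k), the coefficient of xⁿ
in ∏_{k≥1}(1-x^{2k})⁵/((1-x^k)²(1-x^{4k})²) equals the corresponding coefficient of the
partial product over 1 ≤ k ≤ n, and it is asserted to equal that of 1 + 2∑_{m≥1} x^{m²}. -/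
open Classical in
theorem stmt7 (n : ℕ) :
    PowerSeries.coeff (R := ℚ) n
        (∏ k ∈ Finset.Icc 1 n,
          (1 - X ^ (2 * k)) ^ 5 * (((1 - X ^ k) ^ 2 * (1 - X ^ (4 * k)) ^ 2)⁻¹)) =
      if n = 0 then 1 else if IsSquare n then 2 else 0 := by
  rcases Nat.eq_zero_or_pos n with rfl | hn
  · simp
  rw [if_neg (by omega)]
  set P := ∏ k ∈ Finset.Icc 1 n,
      (1 - X ^ (2 * k)) ^ 5 * (((1 - X ^ k) ^ 2 * (1 - (X:ℚ⟦X⟧) ^ (4 * k)) ^ 2)⁻¹) with hP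
  have hT := T_eq_P n
  have hsplit : Aa 2 n * (OdI n)^2 = P + P * ((En n)^2 - 1) := by rw [hT]; ring
  have hz : (coeff (R := ℚ) n) (P * ((En n)^2 - 1)) = 0 := by
    apply X_pow_dvd_iff.mp ((En_sq_dvd n).mul_left P) n (by omega)
  have := theta_coeff n hn
  rw [OdI_eq_Od] at hsplit
  rw [hsplit, map_add, hz, add_zero] at this
  rw [← this]
end

section
/- Jacobi's identity: as formal power series, ∏_{n≥1} (1−x^{2n})(1−x^{2n−1})² = 1 + 2 Σ_{n≥1} (−1)ⁿ x^{n²}. -/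
open PowerSeries Finset

/-- Gaussian binomial coefficient `[n, k]` in the variable `Q = X^2`, as a power series. -/
noncomputable def gb : ℕ → ℕ → PowerSeries ℤ
  | 0, 0 => 1
  | 0, _+1 => 0
  | _+1, 0 => 1
  | n+1, k+1 => gb n k + X ^ (2*(k+1)) * gb n (k+1)

lemma gb_zero_right (n : ℕ) : gb n 0 = 1 := by cases n <;> simp [gb]

lemma gb_succ_succ (n k : ℕ) :
    gb (n+1) (k+1) = gb n k + X ^ (2*(k+1)) * gb n (k+1) := by simp [gb]

lemma gb_eq_zero : ∀ {n k : ℕ}, n < k → gb n k = 0 := by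
  intro n
  induction n with
  | zero => intro k hk; match k, hk with | k+1, _ => simp [gb]
  | succ n ih =>
    intro k hk
    match k, hk with
    | k+1, hk =>
      rw [gb_succ_succ, ih (by omega), ih (by omega)]
      simp

lemma gb_self (n : ℕ) : gb n n = 1 := by
  induction n with
  | zero => simp [gb]
  | succ n ih => rw [gb_succ_succ, ih, gb_eq_zero (Nat.lt_succ_self n)]; simp

lemma gb_pascal2 : ∀ n k : ℕ, k ≤ n →
    gb (n+1) (k+1) = X ^ (2*(n-k)) * gb n k + gb n (k+1) := by
  intro n
  induction n with
  | zero =>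
    intro k hk
    interval_cases k
    simp [gb]
  | succ n ih =>
    intro k hk
    cases k with
    | zero =>
      have h1 := gb_succ_succ (n+1) 0
      have h2 := ih 0 (Nat.zero_le n)
      have h3 := gb_succ_succ n 0
      simp only [Nat.sub_zero] at h2 ⊢
      simp only [gb_zero_right] at h1 h2 h3 ⊢
      linear_combination h1 + X^2 * h2 - h3
    | succ j =>
      rcases Nat.lt_or_ge (j+1) (n+1) with h | h
      · have hj1 : j + 1 ≤ n := by omega
        obtain ⟨d, rfl⟩ : ∃ d, n = j + 1 + d := ⟨n - (j+1), by omega⟩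
        have d1 := gb_succ_succ (j+1+d+1) (j+1)
        have i1 := ih j (by omega)
        have i2 := ih (j+1) hj1
        have d2 := gb_succ_succ (j+1+d) j
        have d3 := gb_succ_succ (j+1+d) (j+1)
        have e1 : j+1+d - j = d+1 := by omega
        have e2 : j+1+d - (j+1) = d := by omega
        have e3 : j+1+d+1 - (j+1) = d+1 := by omega
        rw [e1] at i1
        rw [e2] at i2
        rw [e3]
        linear_combination d1 + i1 - X^(2*(d+1))*d2 + X^(2*(j+2))*i2 - d3
      · -- k = n+1
        have hk2 : j = n := by omega
        subst hk2
        have z1 : gb (j+1) (j+1+1) = 0 := gb_eq_zero (by omega)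
        have z2 : gb (j+1+1) (j+1+1) = 1 := gb_self _
        have z3 : gb (j+1) (j+1) = 1 := gb_self _
        rw [z2, z3, z1]
        simp

/-- Partial product `∏_{j=1}^m (1 - X^{2j})`. -/
noncomputable def Fp (m : ℕ) : PowerSeries ℤ := ∏ j ∈ Finset.Icc 1 m, (1 - X ^ (2*j))

lemma Fp_zero : Fp 0 = 1 := by simp [Fp]

lemma Fp_succ (m : ℕ) : Fp (m+1) = Fp m * (1 - X ^ (2*(m+1))) := by
  rw [Fp, Fp, Finset.prod_Icc_succ_top (by omega)]

lemma gb_prod : ∀ n k : ℕ, k ≤ n → Fp k * Fp (n-k) * gb n k = Fp n := by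
  intro n
  induction n with
  | zero => intro k hk; interval_cases k; simp [gb, Fp]
  | succ n ih =>
    intro k hk
    cases k with
    | zero => simp [gb_zero_right, Fp_zero]
    | succ j =>
      rcases Nat.lt_or_ge (j+1) (n+1) with h | h
      · -- j+1 ≤ n
        obtain ⟨d, rfl⟩ : ∃ d, n = j + 1 + d := ⟨n - (j+1), by omega⟩
        have i1 := ih j (by omega)
        have i2 := ih (j+1) (by omega)
        have f1 := Fp_succ j
        have f2 := Fp_succ d
        have f3 := Fp_succ (j+1+d)
        have d1 := gb_succ_succ (j+1+d) j
        have e1 : j+1+d - j = d+1 := by omega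
        have e2 : j+1+d - (j+1) = d := by omega
        have e3 : j+1+d+1 - (j+1) = d+1 := by omega
        rw [e1] at i1
        rw [e2] at i2
        rw [e3]
        have e4 : 2*(j+1+d+1) = 2*(j+d+2) := by omega
        rw [e4] at f3
        linear_combination (Fp (j+1) * Fp (d+1))*d1 + (Fp (d+1) * gb (j+1+d) j)*f1 +
          (1 - X^(2*(j+1)))*i1 + (X^(2*(j+1)) * Fp (j+1) * gb (j+1+d) (j+1))*f2 +
          (X^(2*(j+1)) - X^(2*(j+d+2)))*i2 - f3
      · -- j+1 = n+1
        have hk2 : j = n := by omega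
        subst hk2
        rw [gb_self]
        simp [Fp_zero]

/-- Double Pascal step used in the induction for the finite Jacobi identity. -/
lemma gb_double (N j : ℕ) (h : j + 1 ≤ 2*N) :
    gb (2*N+2) (j+2) = X ^ (2*(2*N-j)) * gb (2*N) j
      + (1 + X ^ (2*(2*N+1))) * gb (2*N) (j+1) + X ^ (2*(j+2)) * gb (2*N) (j+2) := by
  obtain ⟨d, hd⟩ : ∃ d, 2*N = j + 1 + d := ⟨2*N - (j+1), by omega⟩
  have d1 : gb (2*N+2) (j+2) = gb (2*N+1) (j+1) + X ^ (2*(j+2)) * gb (2*N+1) (j+2) :=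
    gb_succ_succ (2*N+1) (j+1)
  have p1 : gb (2*N+1) (j+1) = X ^ (2*(2*N-j)) * gb (2*N) j + gb (2*N) (j+1) :=
    gb_pascal2 (2*N) j (by omega)
  have p2 : gb (2*N+1) (j+2) = X ^ (2*(2*N-(j+1))) * gb (2*N) (j+1) + gb (2*N) (j+2) :=
    gb_pascal2 (2*N) (j+1) (by omega)
  have e1 : 2*N - j = d+1 := by omega
  have e2 : 2*N - (j+1) = d := by omega
  have e3 : 2*(2*N+1) = 2*(j+d+2) := by omega
  rw [e1] at p1 ⊢
  rw [e2] at p2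
  rw [e3]
  linear_combination d1 + p1 + X^(2*(j+2))*p2

/-- Extended Gaussian binomial `[2N, N+m]` with `m : ℤ`. -/
noncomputable def gz (N : ℕ) (m : ℤ) : PowerSeries ℤ :=
  if -(N:ℤ) ≤ m then gb (2*N) ((N:ℤ) + m).toNat else 0

lemma gz_eq {N : ℕ} {m : ℤ} (h : -(N:ℤ) ≤ m) : gz N m = gb (2*N) ((N:ℤ) + m).toNat := by
  simp [gz, h]

lemma gz_eq_zero_of_lt {N : ℕ} {m : ℤ} (h : m < -(N:ℤ)) : gz N m = 0 := by
  simp [gz, not_le.mpr h]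

lemma gz_eq_zero_of_gt {N : ℕ} {m : ℤ} (h : (N:ℤ) < m) : gz N m = 0 := by
  rw [gz_eq (by omega), gb_eq_zero]
  omega

def eps (m : ℤ) : ℤ := if Even m then 1 else -1

lemma eps_add_one (m : ℤ) : eps (m+1) = - eps m := by
  by_cases h : Even m <;> simp [eps, Int.even_add_one, h]

lemma eps_sub_one (m : ℤ) : eps (m-1) = - eps m := by
  have := eps_add_one (m-1)
  simp only [sub_add_cancel] at this
  omega

lemma gz_rec (N : ℕ) (m : ℤ) :
    gz (N+1) m = X ^ (2*((N:ℤ)+1-m).toNat) * gz N (m-1)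
      + (1 + X ^ (2*(2*N+1))) * gz N m + X ^ (2*((N:ℤ)+1+m).toNat) * gz N (m+1) := by
  by_cases h1 : m < -(N:ℤ)-1
  · rw [gz_eq_zero_of_lt (show m < -((N+1:ℕ):ℤ) by push_cast; omega),
      gz_eq_zero_of_lt (by omega), gz_eq_zero_of_lt (by omega),
      gz_eq_zero_of_lt (by omega)]
    simp
  by_cases h2 : m = -(N:ℤ)-1
  · subst h2
    rw [gz_eq (show -((N+1:ℕ):ℤ) ≤ _ by push_cast; omega),
      gz_eq_zero_of_lt (by omega), gz_eq_zero_of_lt (by omega),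
      gz_eq (show -(N:ℤ) ≤ _ by omega)]
    have e1 : ((N+1:ℕ):ℤ) + (-(N:ℤ)-1) = 0 := by push_cast; ring
    have e2 : ((N:ℤ) + (-(N:ℤ)-1+1)).toNat = 0 := by omega
    have e3 : ((N:ℤ)+1+(-(N:ℤ)-1)).toNat = 0 := by omega
    rw [e1, e2, e3]
    simp [gb_zero_right]
  by_cases h3 : m = -(N:ℤ)
  · subst h3
    rw [gz_eq (show -((N+1:ℕ):ℤ) ≤ _ by push_cast; omega),
      gz_eq_zero_of_lt (by omega),
      gz_eq (show -(N:ℤ) ≤ -(N:ℤ) from le_refl _),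
      gz_eq (show -(N:ℤ) ≤ -(N:ℤ)+1 by omega)]
    have e1 : (((N+1:ℕ):ℤ) + -(N:ℤ)).toNat = 1 := by push_cast; omega
    have e2 : ((N:ℤ) + -(N:ℤ)).toNat = 0 := by omega
    have e3 : ((N:ℤ) + (-(N:ℤ)+1)).toNat = 1 := by omega
    have e4 : ((N:ℤ)+1+(-(N:ℤ))).toNat = 1 := by omega
    rw [e1, e2, e3, e4]
    have d1 : gb (2*(N+1)) 1 = gb (2*N+1) 0 + X ^ (2*(0+1)) * gb (2*N+1) (0+1) := by
      have : 2*(N+1) = (2*N+1)+1 := by omega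
      rw [this]
      exact gb_succ_succ (2*N+1) 0
    have p : gb (2*N+1) (0+1) = X ^ (2*(2*N-0)) * gb (2*N) 0 + gb (2*N) (0+1) :=
      gb_pascal2 (2*N) 0 (by omega)
    simp only [Nat.sub_zero, gb_zero_right, mul_one, zero_add] at d1 p ⊢
    linear_combination d1 + X^(2*1) * p
  by_cases h4 : m = (N:ℤ)+1
  · subst h4
    rw [gz_eq (show -((N+1:ℕ):ℤ) ≤ _ by push_cast; omega),
      gz_eq (show -(N:ℤ) ≤ (N:ℤ)+1-1 by omega),
      gz_eq_zero_of_gt (by omega), gz_eq_zero_of_gt (by omega)]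
    have e1 : (((N+1:ℕ):ℤ) + ((N:ℤ)+1)).toNat = 2*(N+1) := by push_cast; omega
    have e2 : ((N:ℤ) + ((N:ℤ)+1-1)).toNat = 2*N := by omega
    have e3 : ((N:ℤ)+1-((N:ℤ)+1)).toNat = 0 := by omega
    rw [e1, e2, e3, gb_self, gb_self]
    simp
  by_cases h5 : (N:ℤ)+1 < m
  · rw [gz_eq_zero_of_gt (show ((N+1:ℕ):ℤ) < m by push_cast; omega),
      gz_eq_zero_of_gt (by omega), gz_eq_zero_of_gt (by omega),
      gz_eq_zero_of_gt (by omega)]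
    simp
  · -- general case : 1-N ≤ m ≤ N
    obtain ⟨j, hj⟩ : ∃ j : ℕ, (j:ℤ) = (N:ℤ) + m - 1 := ⟨((N:ℤ)+m-1).toNat, by omega⟩
    rw [gz_eq (show -((N+1:ℕ):ℤ) ≤ m by push_cast; omega),
      gz_eq (show -(N:ℤ) ≤ m-1 by omega),
      gz_eq (show -(N:ℤ) ≤ m by omega),
      gz_eq (show -(N:ℤ) ≤ m+1 by omega)]
    have e1 : (((N+1:ℕ):ℤ) + m).toNat = j+2 := by push_cast; omega
    have e2 : ((N:ℤ) + (m-1)).toNat = j := by omega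
    have e3 : ((N:ℤ) + m).toNat = j+1 := by omega
    have e4 : ((N:ℤ) + (m+1)).toNat = j+2 := by omega
    have e5 : ((N:ℤ)+1-m).toNat = 2*N-j := by omega
    have e6 : ((N:ℤ)+1+m).toNat = j+2 := by omega
    rw [e1, e2, e3, e4, e5, e6]
    have : 2*(N+1) = 2*N+2 := by omega
    rw [this]
    exact gb_double N j (by omega)

noncomputable def S (N : ℕ) : PowerSeries ℤ :=
  ∑ m ∈ Finset.Icc (-(N:ℤ)) (N:ℤ), PowerSeries.C (eps m) * X ^ (m.natAbs^2) * gz N m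

lemma S_zero : S 0 = 1 := by
  have : gz 0 0 = 1 := by rw [gz_eq (by omega)]; simp [gb]
  simp [S, eps, this]

lemma exp_shift_up (N : ℕ) (t : ℤ) (h1 : -(N:ℤ) ≤ t) (h2 : t ≤ N) :
    (t+1).natAbs^2 + 2*(((N:ℤ)+1)-(t+1)).toNat = t.natAbs^2 + (2*N+1) := by
  have key : (((t+1).natAbs^2 : ℕ) + 2*((((N:ℤ)+1)-(t+1)).toNat : ℕ) : ℤ)
      = ((t.natAbs^2 : ℕ) + (2*N+1) : ℤ) := by
    push_cast
    rw [sq_abs, sq_abs, Int.toNat_of_nonneg (by omega)]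
    ring
  exact_mod_cast key

lemma exp_shift_down (N : ℕ) (t : ℤ) (h1 : -(N:ℤ) ≤ t) (h2 : t ≤ N) :
    (t-1).natAbs^2 + 2*(((N:ℤ)+1)+(t-1)).toNat = t.natAbs^2 + (2*N+1) := by
  have key : (((t-1).natAbs^2 : ℕ) + 2*((((N:ℤ)+1)+(t-1)).toNat : ℕ) : ℤ)
      = ((t.natAbs^2 : ℕ) + (2*N+1) : ℤ) := by
    push_cast
    rw [sq_abs, sq_abs, Int.toNat_of_nonneg (by omega)]
    ring
  exact_mod_cast key

lemma S_succ (N : ℕ) : S (N+1) = S N * (1 - X^(2*N+1))^2 := by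
  have hrw : ∀ m ∈ Finset.Icc (-((N+1:ℕ):ℤ)) ((N+1:ℕ):ℤ),
      PowerSeries.C (eps m) * X ^ (m.natAbs^2) * gz (N+1) m
      = (PowerSeries.C (eps m) * X ^ (m.natAbs^2) * (X ^ (2*((N:ℤ)+1-m).toNat) * gz N (m-1)))
      + ((1 + X^(2*(2*N+1))) * (PowerSeries.C (eps m) * X ^ (m.natAbs^2) * gz N m))
      + (PowerSeries.C (eps m) * X ^ (m.natAbs^2) * (X ^ (2*((N:ℤ)+1+m).toNat) * gz N (m+1))) := by
    intro m _
    rw [gz_rec]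
    ring
  rw [S, Finset.sum_congr rfl hrw, Finset.sum_add_distrib, Finset.sum_add_distrib]
  -- T1
  have hT1 : ∑ m ∈ Finset.Icc (-((N+1:ℕ):ℤ)) ((N+1:ℕ):ℤ),
      (PowerSeries.C (eps m) * X ^ (m.natAbs^2) * (X ^ (2*((N:ℤ)+1-m).toNat) * gz N (m-1)))
      = (-(X^(2*N+1))) * S N := by
    rw [← Finset.sum_subset
      (Finset.Icc_subset_Icc (show -((N+1:ℕ):ℤ) ≤ -(N:ℤ)+1 by push_cast; omega)
        (show (N:ℤ)+1 ≤ ((N+1:ℕ):ℤ) by push_cast; omega))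
      (fun m hm hnm => by
        rw [gz_eq_zero_of_lt (show m - 1 < -(N:ℤ) by
          simp only [Finset.mem_Icc] at hm hnm; push_cast at hm; omega)]
        simp)]
    rw [show (-(N:ℤ)+1 : ℤ) = -(N:ℤ) + 1 from rfl, ← Finset.map_add_right_Icc,
      Finset.sum_map]
    rw [S, Finset.mul_sum]
    refine Finset.sum_congr rfl (fun t ht => ?_)
    simp only [Finset.mem_Icc] at ht
    simp only [addRightEmbedding_apply, add_sub_cancel_right]
    rw [eps_add_one, map_neg]
    have hx : (X : PowerSeries ℤ) ^ ((t+1).natAbs^2) * X ^ (2*(((N:ℤ)+1)-(t+1)).toNat)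
        = X ^ (t.natAbs^2) * X^(2*N+1) := by
      rw [← pow_add, ← pow_add, exp_shift_up N t ht.1 ht.2]
    linear_combination (-(PowerSeries.C (eps t)) * gz N t) * hx
  -- T3
  have hT3 : ∑ m ∈ Finset.Icc (-((N+1:ℕ):ℤ)) ((N+1:ℕ):ℤ),
      (PowerSeries.C (eps m) * X ^ (m.natAbs^2) * (X ^ (2*((N:ℤ)+1+m).toNat) * gz N (m+1)))
      = (-(X^(2*N+1))) * S N := by
    rw [← Finset.sum_subset
      (Finset.Icc_subset_Icc (show -((N+1:ℕ):ℤ) ≤ -(N:ℤ)+(-1) by push_cast; omega)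
        (show (N:ℤ)+(-1) ≤ ((N+1:ℕ):ℤ) by push_cast; omega))
      (fun m hm hnm => by
        rw [gz_eq_zero_of_gt (show (N:ℤ) < m + 1 by
          simp only [Finset.mem_Icc] at hm hnm; push_cast at hm; omega)]
        simp)]
    rw [← Finset.map_add_right_Icc, Finset.sum_map]
    rw [S, Finset.mul_sum]
    refine Finset.sum_congr rfl (fun t ht => ?_)
    simp only [Finset.mem_Icc] at ht
    simp only [addRightEmbedding_apply]
    rw [show t + (-1 : ℤ) = t - 1 by ring, show t - (1:ℤ) + 1 = t by ring]
    rw [eps_sub_one, map_neg]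
    have hx : (X : PowerSeries ℤ) ^ ((t-1).natAbs^2) * X ^ (2*(((N:ℤ)+1)+(t-1)).toNat)
        = X ^ (t.natAbs^2) * X^(2*N+1) := by
      rw [← pow_add, ← pow_add, exp_shift_down N t ht.1 ht.2]
    linear_combination (-(PowerSeries.C (eps t)) * gz N t) * hx
  -- T2
  have hT2 : ∑ m ∈ Finset.Icc (-((N+1:ℕ):ℤ)) ((N+1:ℕ):ℤ),
      ((1 + X^(2*(2*N+1))) * (PowerSeries.C (eps m) * X ^ (m.natAbs^2) * gz N m))
      = (1 + X^(2*(2*N+1))) * S N := by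
    rw [← Finset.sum_subset
      (Finset.Icc_subset_Icc (show -((N+1:ℕ):ℤ) ≤ -(N:ℤ) by push_cast; omega)
        (show (N:ℤ) ≤ ((N+1:ℕ):ℤ) by push_cast; omega))
      (fun m hm hnm => by
        simp only [Finset.mem_Icc] at hm hnm
        push_cast at hm
        rcases (by omega : m < -(N:ℤ) ∨ (N:ℤ) < m) with h | h
        · rw [gz_eq_zero_of_lt h]; simp
        · rw [gz_eq_zero_of_gt h]; simp)]
    rw [S, Finset.mul_sum]
  rw [hT1, hT2, hT3]
  ring

lemma jacobi_finite (N : ℕ) :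
    ∏ k ∈ Finset.Icc 1 N, (1 - (X : PowerSeries ℤ)^(2*k-1))^2 = S N := by
  induction N with
  | zero => simp [S_zero]
  | succ N ih =>
    rw [Finset.prod_Icc_succ_top (by omega), ih, S_succ]
    have : 2*(N+1)-1 = 2*N+1 := by omega
    rw [this]

lemma constantCoeff_Fp (m : ℕ) : constantCoeff (Fp m) = 1 := by
  rw [Fp, map_prod]
  apply Finset.prod_eq_one
  intro j hj
  simp only [Finset.mem_Icc] at hj
  rw [map_sub, map_one, map_pow, constantCoeff_X, zero_pow (by omega)]
  ring

lemma dvd_prod_sub_one (s : Finset ℕ) (c : ℕ) (h : ∀ j ∈ s, c ≤ 2*j) :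
    (X:PowerSeries ℤ)^c ∣ (∏ j ∈ s, (1 - X^(2*j) : PowerSeries ℤ)) - 1 := by
  classical
  induction s using Finset.induction with
  | empty => simp
  | @insert a s' hx ih =>
    rw [Finset.prod_insert hx]
    have h1 : (X:PowerSeries ℤ)^c ∣ (1 - X^(2*a)) - 1 := by
      rw [show (1 - X^(2*a) : PowerSeries ℤ) - 1 = -(X^(2*a)) by ring]
      exact (pow_dvd_pow _ (h a (Finset.mem_insert_self a s'))).neg_right
    have h2 : (X:PowerSeries ℤ)^c ∣ (∏ j ∈ s', (1 - X^(2*j) : PowerSeries ℤ)) - 1 :=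
      ih (fun j hj => h j (Finset.mem_insert_of_mem hj))
    have : (1 - X^(2*a)) * (∏ j ∈ s', (1 - X^(2*j) : PowerSeries ℤ)) - 1
        = (1 - X^(2*a)) * ((∏ j ∈ s', (1 - X^(2*j) : PowerSeries ℤ)) - 1)
          + ((1 - X^(2*a)) - 1) := by ring
    rw [this]
    exact dvd_add (Dvd.dvd.mul_left h2 _) h1

lemma Fp_split (a b : ℕ) (h : a ≤ b) :
    Fp b = Fp a * ∏ j ∈ Finset.Ioc a b, (1 - (X:PowerSeries ℤ)^(2*j)) := by
  rw [Fp, Fp, show (1:ℕ) = 0 + 1 from rfl, Finset.Icc_add_one_left_eq_Ioc, Finset.Icc_add_one_left_eq_Ioc]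
  exact (Finset.prod_Ioc_consecutive _ (Nat.zero_le a) h).symm

lemma Fp_gb_cong (N a : ℕ) (ha : a ≤ N) (K : ℕ) (hK : K = N + a ∨ K = N - a) :
    (X:PowerSeries ℤ) ^ (N - a^2 + 1) ∣ Fp N * gb (2*N) K - 1 := by
  set c := N - a^2 + 1 with hc
  have haa : a ≤ a^2 := by nlinarith
  -- the unit P
  set P := Fp (N+a) * Fp (N-a) with hP
  have hPunit : IsUnit P := by
    rw [PowerSeries.isUnit_iff_constantCoeff, hP, map_mul, constantCoeff_Fp, constantCoeff_Fp]
    simp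
  -- h2 : P * (Fp N * gb (2N) K) = Fp N * Fp (2N)
  have h2 : P * (Fp N * gb (2*N) K) = Fp N * Fp (2*N) := by
    rcases hK with rfl | rfl
    · have := gb_prod (2*N) (N+a) (by omega)
      rw [show 2*N - (N+a) = N - a by omega] at this
      linear_combination Fp N * this
    · have := gb_prod (2*N) (N-a) (by omega)
      rw [show 2*N - (N-a) = N + a by omega] at this
      linear_combination Fp N * this
  -- h3 : X^c ∣ Fp N * Fp (2N) - P
  have hW1 : Fp N = Fp (N-a) * ∏ j ∈ Finset.Ioc (N-a) N, (1 - (X:PowerSeries ℤ)^(2*j)) :=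
    Fp_split (N-a) N (by omega)
  have hW2 : Fp (2*N) = Fp (N+a) * ∏ j ∈ Finset.Ioc (N+a) (2*N), (1 - (X:PowerSeries ℤ)^(2*j)) :=
    Fp_split (N+a) (2*N) (by omega)
  have hd1 : (X:PowerSeries ℤ)^c ∣ (∏ j ∈ Finset.Ioc (N-a) N, (1 - (X:PowerSeries ℤ)^(2*j))) - 1 := by
    apply dvd_prod_sub_one
    intro j hj
    simp only [Finset.mem_Ioc] at hj
    omega
  have hd2 : (X:PowerSeries ℤ)^c ∣ (∏ j ∈ Finset.Ioc (N+a) (2*N), (1 - (X:PowerSeries ℤ)^(2*j))) - 1 := by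
    apply dvd_prod_sub_one
    intro j hj
    simp only [Finset.mem_Ioc] at hj
    omega
  set W1 := ∏ j ∈ Finset.Ioc (N-a) N, (1 - (X:PowerSeries ℤ)^(2*j)) with hW1d
  set W2 := ∏ j ∈ Finset.Ioc (N+a) (2*N), (1 - (X:PowerSeries ℤ)^(2*j)) with hW2d
  have h3 : (X:PowerSeries ℤ)^c ∣ Fp N * Fp (2*N) - P := by
    rw [hW1, hW2, hP]
    have : Fp (N-a) * W1 * (Fp (N+a) * W2) - Fp (N+a) * Fp (N-a)
        = (Fp (N-a) * Fp (N+a)) * (W1 * (W2 - 1) + (W1 - 1)) := by ring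
    rw [this]
    exact Dvd.dvd.mul_left (dvd_add (Dvd.dvd.mul_left hd2 _) hd1) _
  -- combine
  have h4 : (X:PowerSeries ℤ)^c ∣ P * (Fp N * gb (2*N) K - 1) := by
    rw [mul_sub, h2, mul_one]
    exact h3
  obtain ⟨u, hu⟩ := hPunit.exists_left_inv
  have : Fp N * gb (2*N) K - 1 = u * (P * (Fp N * gb (2*N) K - 1)) := by
    rw [← mul_assoc, hu, one_mul]
  rw [this]
  exact Dvd.dvd.mul_left h4 u

lemma eps_coe (s : ℕ) : eps (s:ℤ) = (-1:ℤ)^s := by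
  by_cases h : Even s
  · rw [eps, if_pos (by rwa [Int.even_coe_nat]), h.neg_one_pow]
  · rw [eps, if_neg (by rwa [Int.even_coe_nat]), (Nat.not_even_iff_odd.mp h).neg_one_pow]

/- Jacobi's identity. Since the k-th factor of the infinite product is ≡ 1 (mod x^(2k-1)),
the coefficient of xⁿ in ∏_{k≥1}(1-x^{2k})(1-x^{2k-1})² equals the corresponding coefficient
of the partial product over 1 ≤ k ≤ n, asserted to equal that of 1 + 2∑_{m≥1}(-1)^m x^{m²},
namely 2·(-1)^√n if n ≥ 1 is a perfect square. -/
open Classical in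
theorem stmt11 (n : ℕ) :
    PowerSeries.coeff (R := ℤ) n
        (∏ k ∈ Finset.Icc 1 n, (1 - X ^ (2 * k)) * (1 - X ^ (2 * k - 1)) ^ 2) =
      if n = 0 then 1 else if IsSquare n then 2 * (-1) ^ Nat.sqrt n else 0 := by
  rcases Nat.eq_zero_or_pos n with rfl | hn
  · simp
  have hsplit : ∏ k ∈ Finset.Icc 1 n, ((1 - X ^ (2*k)) * (1 - X ^ (2*k-1))^2 : PowerSeries ℤ)
      = Fp n * ∑ m ∈ Finset.Icc (-(n:ℤ)) (n:ℤ),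
          PowerSeries.C (eps m) * X ^ (m.natAbs^2) * gz n m := by
    rw [Finset.prod_mul_distrib, ← Fp, jacobi_finite, S]
  rw [hsplit, Finset.mul_sum, map_sum]
  have hterm : ∀ m ∈ Finset.Icc (-(n:ℤ)) (n:ℤ),
      (PowerSeries.coeff n) (Fp n * (PowerSeries.C (eps m) * X ^ (m.natAbs^2) * gz n m))
      = if m.natAbs^2 = n then eps m else 0 := by
    intro m hm
    simp only [Finset.mem_Icc] at hm
    obtain ⟨hm1, hm2⟩ := hm
    have harr : Fp n * (PowerSeries.C (eps m) * X ^ (m.natAbs^2) * gz n m)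
        = PowerSeries.C (eps m) * (X ^ (m.natAbs^2) * (Fp n * gz n m)) := by ring
    rw [harr, PowerSeries.coeff_C_mul, PowerSeries.coeff_X_pow_mul']
    by_cases hp : m.natAbs^2 ≤ n
    · rw [if_pos hp]
      have ha : m.natAbs ≤ n := le_trans (Nat.le_self_pow two_ne_zero _) hp
      have hK : ((n:ℤ)+m).toNat = n + m.natAbs ∨ ((n:ℤ)+m).toNat = n - m.natAbs := by omega
      have hgz : gz n m = gb (2*n) ((n:ℤ)+m).toNat := gz_eq (by omega)
      have hcong := Fp_gb_cong n m.natAbs ha _ hK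
      obtain ⟨q, hq⟩ := hcong
      have hfg : Fp n * gz n m = 1 + X^(n - m.natAbs^2 + 1) * q := by
        rw [hgz]
        linear_combination hq
      rw [hfg, map_add, PowerSeries.coeff_one, PowerSeries.coeff_X_pow_mul']
      rw [if_neg (show ¬(n - m.natAbs^2 + 1 ≤ n - m.natAbs^2) by omega), add_zero]
      by_cases hq2 : m.natAbs^2 = n
      · rw [if_pos (show n - m.natAbs^2 = 0 by omega), if_pos hq2, mul_one]
      · rw [if_neg (show ¬(n - m.natAbs^2 = 0) by omega), if_neg hq2, mul_zero]
    · rw [if_neg hp, mul_zero, if_neg (by omega)]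
  rw [Finset.sum_congr rfl hterm]
  rw [if_neg (by omega)]
  by_cases hsq : IsSquare n
  · rw [if_pos hsq]
    obtain ⟨s, hs⟩ := hsq
    have hs1 : 1 ≤ s := by nlinarith
    have hsub : ({(s:ℤ), -(s:ℤ)} : Finset ℤ) ⊆ Finset.Icc (-(n:ℤ)) (n:ℤ) := by
      intro x hx
      simp only [Finset.mem_insert, Finset.mem_singleton] at hx
      simp only [Finset.mem_Icc]
      have : s ≤ n := by nlinarith
      rcases hx with rfl | rfl <;> constructor <;> omega
    rw [← Finset.sum_subset hsub (fun m hm hnm => by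
      simp only [Finset.mem_insert, Finset.mem_singleton] at hnm
      push_neg at hnm
      apply if_neg
      intro hcon
      have : m.natAbs = s := by
        have : m.natAbs^2 = s^2 := by rw [hcon, hs]; ring
        exact Nat.pow_left_injective (by norm_num) this
      rcases Int.natAbs_eq m with h | h <;> [exact hnm.1 (by omega); exact hnm.2 (by omega)])]
    rw [Finset.sum_pair (show (s:ℤ) ≠ -(s:ℤ) by omega)]
    have habs1 : ((s:ℤ)).natAbs = s := Int.natAbs_natCast s
    have habs2 : ((-(s:ℤ))).natAbs = s := by simp
    rw [if_pos (by rw [habs1, hs]; ring), if_pos (by rw [habs2, hs]; ring)]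
    have hsqrt : Nat.sqrt n = s := by rw [hs, Nat.sqrt_eq]
    rw [hsqrt]
    have he : eps (-(s:ℤ)) = eps (s:ℤ) := by unfold eps; simp only [even_neg]
    rw [he, eps_coe]
    ring
  · rw [if_neg hsq]
    apply Finset.sum_eq_zero
    intro m hm
    apply if_neg
    intro hcon
    exact hsq ⟨m.natAbs, by rw [← hcon]; ring⟩
end

section
/- Main recursion theorem (α = 1 case, Apostol): Let A ⊆ ℕ and f : A → ℂ be such that F(x) = ∏_{n∈A} (1−xⁿ)^{−f(n)/n} = Σ_{n≥0} p(n)xⁿ and Σ_{n∈A} (f(n)/n) xⁿ converge absolutely on |x|<1. Then for all n ≥ 1, n·p(n) = Σ_{k=1}^{n} p(n−k) f_A(k), where p(0)=1 and f_A(k) = Σ_{d|k, d∈A} f(d). -/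
open Complex FormalMultilinearSeries



private lemma memball {y : ℂ} : y ∈ EMetric.ball (0:ℂ) 1 ↔ ‖y‖ < 1 := by
  show edist y 0 < 1 ↔ _
  rw [edist_dist, ENNReal.ofReal_lt_one, dist_zero_right]

private lemma rep_of_hasSum {a : ℕ → ℂ} {g : ℂ → ℂ}
    (h : ∀ x : ℂ, ‖x‖ < 1 → HasSum (fun n => a n * x ^ n) (g x))
    (habs : ∀ x : ℂ, ‖x‖ < 1 → Summable (fun n => ‖a n * x ^ n‖)) :
    HasFPowerSeriesOnBall g (ofScalars ℂ a) 0 1 := by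
  refine ⟨?_, one_pos, ?_⟩
  · refine ENNReal.le_of_forall_nnreal_lt fun r hr => ?_
    apply le_radius_of_summable
    have hr1 : ‖((r : ℝ) : ℂ)‖ < 1 := by
      rw [Complex.norm_real, Real.norm_of_nonneg r.coe_nonneg]
      exact_mod_cast hr
    refine (habs _ hr1).congr fun n => ?_
    rw [norm_mul, norm_pow, Complex.norm_real, Real.norm_of_nonneg r.coe_nonneg, ofScalars_norm]
  · intro y hy
    rw [EMetric.mem_ball] at hy
    have hy' : ‖y‖ < 1 := memball.mp hy
    have := h y hy'
    simp only [zero_add]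
    convert this using 2 with n
    · rfl
    rw [ofScalars_apply_eq, smul_eq_mul]

private lemma coeff_unique {a b : ℕ → ℂ} {g : ℂ → ℂ}
    (ha : HasFPowerSeriesOnBall g (ofScalars ℂ a) 0 1)
    (hb : HasFPowerSeriesOnBall g (ofScalars ℂ b) 0 1) : a = b :=
  (ofScalars_series_eq_iff ℂ a b).mp <|
    ha.hasFPowerSeriesAt.eq_formalMultilinearSeries hb.hasFPowerSeriesAt


private lemma hasSum_mul_deriv {a : ℕ → ℂ} {g : ℂ → ℂ}
    (h : HasFPowerSeriesOnBall g (ofScalars ℂ a) 0 1) {x : ℂ} (hx : ‖x‖ < 1) :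
    HasSum (fun n : ℕ => (n : ℂ) * a n * x ^ n) (x * deriv g x) := by
  have hd := h.fderiv
  have hx' : x ∈ EMetric.ball (0:ℂ) 1 := memball.mpr hx
  have hs := hd.hasSum (y := x) hx'
  have hs2 := (ContinuousLinearMap.apply ℂ ℂ x).hasSum hs
  simp only [ContinuousLinearMap.apply_apply, zero_add] at hs2
  have hval : ∀ n : ℕ, ((ofScalars ℂ a).derivSeries n fun _ => x) x
      = ((n : ℂ) + 1) * a (n + 1) * x ^ (n + 1) := by
    intro n
    rw [FormalMultilinearSeries.derivSeries_apply_diag, ofScalars_apply_eq, nsmul_eq_mul,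
      smul_eq_mul]
    push_cast
    ring
  have hfx : fderiv ℂ g x x = x * deriv g x := by
    have : x = x • (1 : ℂ) := by simp
    conv_lhs => rw [this, ContinuousLinearMap.map_smul]
    simp [fderiv_apply_one_eq_deriv, smul_eq_mul]
  rw [hfx] at hs2
  simp only [hval] at hs2
  have hs3 := (hasSum_nat_add_iff (f := fun m : ℕ => (m : ℂ) * a m * x ^ m) 1).mp
    (by push_cast; exact hs2)
  simpa using hs3


private lemma summable_nmul {a : ℕ → ℂ}
    (h : ∀ x : ℂ, ‖x‖ < 1 → Summable fun n => ‖a n * x ^ n‖)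
    {x : ℂ} (hx : ‖x‖ < 1) : Summable fun n : ℕ => ‖(n : ℂ) * a n * x ^ n‖ := by
  set r : ℝ := (1 + ‖x‖) / 2 with hrdef
  have hxr : ‖x‖ < r := by rw [hrdef]; linarith
  have hr0 : 0 < r := lt_of_le_of_lt (norm_nonneg x) hxr
  have hr1 : r < 1 := by rw [hrdef]; linarith
  have hsum := h (r : ℂ) (by rwa [Complex.norm_real, Real.norm_of_nonneg hr0.le])
  have hsum' : Summable fun n : ℕ => ‖a n‖ * r ^ n := by
    refine hsum.congr fun n => ?_
    rw [norm_mul, norm_pow, Complex.norm_real, Real.norm_of_nonneg hr0.le]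
  obtain ⟨C, hC⟩ := hsum'.tendsto_atTop_zero.bddAbove_range
  have hC' : ∀ n : ℕ, ‖a n‖ * r ^ n ≤ C := fun n => hC ⟨n, rfl⟩
  have ht1 : ‖x‖ / r < 1 := (div_lt_one hr0).mpr hxr
  have hmaj : Summable fun n : ℕ => C * ((n : ℝ) ^ 1 * (‖x‖ / r) ^ n) :=
    (summable_pow_mul_geometric_of_norm_lt_one 1
      (by rwa [Real.norm_of_nonneg (by positivity)])).mul_left C
  refine hmaj.of_nonneg_of_le (fun n => norm_nonneg _) fun n => ?_
  have hrn : (0:ℝ) < r ^ n := pow_pos hr0 n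
  calc ‖(n : ℂ) * a n * x ^ n‖ = (n : ℝ) * ‖a n‖ * ‖x‖ ^ n := by
        rw [norm_mul, norm_mul, norm_pow, Complex.norm_natCast]
    _ = (‖a n‖ * r ^ n) * ((n : ℝ) ^ 1 * (‖x‖ / r) ^ n) := by
        have hxx : r ^ n * (‖x‖ / r) ^ n = ‖x‖ ^ n := by
          rw [← mul_pow, mul_div_cancel₀ _ hr0.ne']
        calc (n : ℝ) * ‖a n‖ * ‖x‖ ^ n = (n : ℝ) * ‖a n‖ * (r ^ n * (‖x‖ / r) ^ n) := by
              rw [hxx]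
          _ = (‖a n‖ * r ^ n) * ((n : ℝ) ^ 1 * (‖x‖ / r) ^ n) := by ring
    _ ≤ C * ((n : ℝ) ^ 1 * (‖x‖ / r) ^ n) := by
        have h2 : (0:ℝ) ≤ (n : ℝ) ^ 1 * (‖x‖ / r) ^ n := by positivity
        exact mul_le_mul_of_nonneg_right (hC' n) h2

private lemma hasSum_antidiag_fiber {E : Type*} [NormedAddCommGroup E] [CompleteSpace E]
    {g : ℕ × ℕ → E} (hg : Summable g) (h0 : ∀ q : ℕ × ℕ, q.1 * q.2 = 0 → g q = 0) :
    HasSum (fun k : ℕ => ∑ q ∈ k.divisorsAntidiagonal, g q) (∑' q, g q) := by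
  have hfib : ∀ k : ℕ, HasSum (fun q : (fun q : ℕ × ℕ => q.1 * q.2) ⁻¹' {k} => g ↑q)
      (∑ q ∈ k.divisorsAntidiagonal, g q) := by
    intro k
    refine (hasSum_subtype_iff_indicator (s := (fun q : ℕ × ℕ => q.1 * q.2) ⁻¹' {k})
      (f := g)).mpr ?_
    have h1 : ∀ q : ℕ × ℕ, q ∉ k.divisorsAntidiagonal →
        Set.indicator ((fun q : ℕ × ℕ => q.1 * q.2) ⁻¹' {k}) g q = 0 := by
      intro q hq
      by_cases hqs : q ∈ (fun q : ℕ × ℕ => q.1 * q.2) ⁻¹' {k}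
      · rw [Set.indicator_of_mem hqs]
        have hk : q.1 * q.2 = k := hqs
        rcases Nat.eq_zero_or_pos k with rfl | hkpos
        · exact h0 q hk
        · exact absurd (Nat.mem_divisorsAntidiagonal.mpr ⟨hk, hkpos.ne'⟩) hq
      · exact Set.indicator_of_notMem hqs g
    have h2 := hasSum_sum_of_ne_finset_zero (L := SummationFilter.unconditional _) (s := k.divisorsAntidiagonal) h1
    have h3 : ∑ q ∈ k.divisorsAntidiagonal,
        Set.indicator ((fun q : ℕ × ℕ => q.1 * q.2) ⁻¹' {k}) g q
        = ∑ q ∈ k.divisorsAntidiagonal, g q := by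
      refine Finset.sum_congr rfl fun q hq => ?_
      exact Set.indicator_of_mem (show q ∈ (fun q : ℕ × ℕ => q.1 * q.2) ⁻¹' {k} from (Nat.mem_divisorsAntidiagonal.mp hq).1) g
    rwa [h3] at h2
  have hmain := hg.hasSum.tsum_fiberwise (fun q => q.1 * q.2)
  refine hmain.congr_fun fun k => ((hfib k).tsum_eq.symm : _)


section Main

variable (A : Set ℕ) (f : ℕ → ℂ)

private noncomputable def cSeq (k : ℕ) : ℂ := (∑ d ∈ k.divisors, A.indicator f d) / k

private noncomputable def gFun (x : ℂ) (q : ℕ × ℕ) : ℂ :=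
  A.indicator f q.1 / (q.1 : ℂ) * x ^ (q.1 * q.2) / (q.2 : ℂ)

private noncomputable def LFun (x : ℂ) : ℂ := ∑' q : ℕ × ℕ, gFun A f x q

variable {A f}

private lemma g_zero (hA : 0 ∉ A) (x : ℂ) :
    ∀ q : ℕ × ℕ, q.1 * q.2 = 0 → gFun A f x q = 0 := by
  rintro ⟨n, m⟩ hq
  rcases Nat.mul_eq_zero.mp hq with h | h <;> subst h
  · simp [gFun, Set.indicator_of_notMem hA]
  · simp [gFun]

private lemma g_summable (hA : 0 ∉ A) {x : ℂ} (hx : ‖x‖ < 1)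
    (hGx : Summable (fun n : A => ‖f n / ((n : ℕ) : ℂ) * x ^ (n : ℕ)‖)) :
    Summable fun q : ℕ × ℕ => ‖gFun A f x q‖ := by
  have hu : Summable (A.indicator fun n : ℕ => ‖f n / (n : ℂ) * x ^ n‖) :=
    summable_subtype_iff_indicator.mp hGx
  have hv : Summable (fun m : ℕ => if m = 0 then (0:ℝ) else ‖x‖ ^ (m - 1)) := by
    rw [← summable_nat_add_iff 1]
    simpa using summable_geometric_of_lt_one (norm_nonneg x) hx
  have hun : ∀ n, 0 ≤ A.indicator (fun n : ℕ => ‖f n / (n : ℂ) * x ^ n‖) n :=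
    fun n => Set.indicator_nonneg (fun j _ => norm_nonneg _) n
  have hvn : ∀ m, 0 ≤ (if m = 0 then (0:ℝ) else ‖x‖ ^ (m - 1)) := by
    intro m; split <;> positivity
  refine (hu.mul_of_nonneg hv hun hvn).of_nonneg_of_le (fun q => norm_nonneg _) ?_
  rintro ⟨n, m⟩
  by_cases hnA : n ∈ A
  · have hn0 : n ≠ 0 := fun h => hA (h ▸ hnA)
    rcases Nat.eq_zero_or_pos m with rfl | hm
    · simp only [g_zero hA x (n, 0) (by simp), norm_zero]
      exact mul_nonneg (hun n) (hvn 0)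
    · have hm0 : m ≠ 0 := hm.ne'
      simp only [gFun, Set.indicator_of_mem hnA, if_neg hm0]
      have hnorm : ‖f n / (n : ℂ) * x ^ (n * m) / (m : ℂ)‖
          = ‖f n / (n : ℂ)‖ * ‖x‖ ^ (n * m) / (m : ℝ) := by
        rw [norm_div, norm_mul, norm_pow, Complex.norm_natCast]
      rw [hnorm]
      have h1 : ‖f n / (n : ℂ)‖ * ‖x‖ ^ (n * m) / (m : ℝ)
          ≤ ‖f n / (n : ℂ)‖ * ‖x‖ ^ (n * m) := by
        apply div_le_self (by positivity)
        exact_mod_cast hm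
      refine h1.trans ?_
      have h2 : n + (m - 1) ≤ n * m := by
        obtain ⟨m', rfl⟩ : ∃ m', m = m' + 1 := ⟨m - 1, (Nat.succ_pred_eq_of_pos hm).symm⟩
        have : n + n * m' ≤ n * (m' + 1) := by rw [Nat.mul_succ]; omega
        calc n + (m' + 1 - 1) = n + m' := by omega
          _ ≤ n + n * m' := by
              have := Nat.le_mul_of_pos_left m' (Nat.pos_of_ne_zero hn0)
              omega
          _ ≤ n * (m' + 1) := this
      have h3 : ‖x‖ ^ (n * m) ≤ ‖x‖ ^ (n + (m - 1)) :=
        pow_le_pow_of_le_one (norm_nonneg x) hx.le h2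
      calc ‖f n / (n : ℂ)‖ * ‖x‖ ^ (n * m) ≤ ‖f n / (n : ℂ)‖ * ‖x‖ ^ (n + (m - 1)) :=
            mul_le_mul_of_nonneg_left h3 (norm_nonneg _)
        _ = (‖f n / (n : ℂ)‖ * ‖x‖ ^ n) * ‖x‖ ^ (m - 1) := by rw [pow_add]; ring
        _ = ‖f n / (n : ℂ) * x ^ n‖ * ‖x‖ ^ (m - 1) := by rw [norm_mul, norm_pow]
  · simp only [gFun, Set.indicator_of_notMem hnA, zero_div, zero_mul, norm_zero]
    exact le_rfl

private lemma fin_sum (hA : 0 ∉ A) (x : ℂ) (k : ℕ) :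
    ∑ q ∈ k.divisorsAntidiagonal, gFun A f x q = cSeq A f k * x ^ k := by
  have h1 : ∀ q ∈ k.divisorsAntidiagonal,
      gFun A f x q = A.indicator f q.1 * x ^ k / (k : ℂ) := by
    rintro ⟨d, e⟩ hq
    obtain ⟨hde, hk0⟩ := Nat.mem_divisorsAntidiagonal.mp hq
    have hd0 : d ≠ 0 := by rintro rfl; simp at hde; omega
    have he0 : e ≠ 0 := by rintro rfl; simp at hde; omega
    have hdc : (d : ℂ) ≠ 0 := Nat.cast_ne_zero.mpr hd0
    have hec : (e : ℂ) ≠ 0 := Nat.cast_ne_zero.mpr he0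
    simp only [gFun]
    rw [← hde, Nat.cast_mul]
    field_simp
    try ring
  rw [Finset.sum_congr rfl h1]
  rw [Nat.sum_divisorsAntidiagonal (fun d e => A.indicator f d * x ^ k / (k : ℂ))]
  rw [cSeq, ← Finset.sum_div, ← Finset.sum_mul, div_mul_eq_mul_div]

private lemma hasSum_cSeq (hA : 0 ∉ A) {x : ℂ} (hx : ‖x‖ < 1)
    (hGx : Summable (fun n : A => ‖f n / ((n : ℕ) : ℂ) * x ^ (n : ℕ)‖)) :
    HasSum (fun k : ℕ => cSeq A f k * x ^ k) (LFun A f x) := by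
  have h4 := hasSum_antidiag_fiber ((g_summable hA hx hGx).of_norm) (g_zero hA x)
  exact h4.congr_fun fun k => (fin_sum hA x k).symm

private lemma summable_norm_cSeq (hA : 0 ∉ A) {x : ℂ} (hx : ‖x‖ < 1)
    (hGx : Summable (fun n : A => ‖f n / ((n : ℕ) : ℂ) * x ^ (n : ℕ)‖)) :
    Summable fun k : ℕ => ‖cSeq A f k * x ^ k‖ := by
  have h0n : ∀ q : ℕ × ℕ, q.1 * q.2 = 0 → ‖gFun A f x q‖ = 0 := fun q hq => by
    rw [g_zero hA x q hq, norm_zero]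
  have h5 := (hasSum_antidiag_fiber (g_summable hA hx hGx) h0n).summable
  refine h5.of_nonneg_of_le (fun k => norm_nonneg _) fun k => ?_
  rw [← fin_sum hA x k]
  exact norm_sum_le _ _

private lemma F_eq_exp (hA : 0 ∉ A) {x : ℂ} (hx : ‖x‖ < 1)
    (hGx : Summable (fun n : A => ‖f n / ((n : ℕ) : ℂ) * x ^ (n : ℕ)‖))
    {Fx : ℂ}
    (hprodx : HasProd (fun n : A => (1 - x ^ (n : ℕ)) ^ (-(f n / ((n : ℕ) : ℂ)))) Fx) :
    Fx = Complex.exp (LFun A f x) := by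
  have hg : HasSum (gFun A f x) (LFun A f x) := ((g_summable hA hx hGx).of_norm).hasSum
  have hrow : ∀ n : ℕ, HasSum (fun m => gFun A f x (n, m))
      (A.indicator (fun j => f j / (j : ℂ) * -(Complex.log (1 - x ^ j))) n) := by
    intro n
    by_cases hnA : n ∈ A
    · have hn0 : n ≠ 0 := fun h => hA (h ▸ hnA)
      have hz : ‖x ^ n‖ < 1 := by
        rw [norm_pow]; exact pow_lt_one₀ (norm_nonneg x) hx hn0
      have htay := (hasSum_taylorSeries_neg_log hz).mul_left (f n / (n : ℂ))
      rw [Set.indicator_of_mem hnA]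
      refine htay.congr_fun fun m => ?_
      simp only [gFun, Set.indicator_of_mem hnA]
      rw [← pow_mul, mul_div_assoc]
    · rw [Set.indicator_of_notMem hnA]
      have : ∀ m : ℕ, gFun A f x (n, m) = 0 := by
        intro m
        simp [gFun, Set.indicator_of_notMem hnA]
      simpa [this] using hasSum_zero
  have hrows : HasSum (A.indicator fun j => f j / (j : ℂ) * -(Complex.log (1 - x ^ j)))
      (LFun A f x) := hg.prod_fiberwise hrow
  have hsub : HasSum (fun n : A => f (n : ℕ) / ((n : ℕ) : ℂ) *
      -(Complex.log (1 - x ^ (n : ℕ)))) (LFun A f x) :=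
    hasSum_subtype_iff_indicator.mpr hrows
  have h6 : HasSum (fun n : A => Complex.log (1 - x ^ (n : ℕ)) *
      -(f (n : ℕ) / ((n : ℕ) : ℂ))) (LFun A f x) :=
    hsub.congr_fun fun n => by ring
  have hprod2 := h6.cexp
  have hprod3 : HasProd (fun n : A => (1 - x ^ (n : ℕ)) ^ (-(f n / ((n : ℕ) : ℂ))))
      (Complex.exp (LFun A f x)) := by
    refine hprod2.congr_fun fun n => ?_
    have hn0 : (n : ℕ) ≠ 0 := fun h => hA (h ▸ n.2)
    have hne : (1 : ℂ) - x ^ (n : ℕ) ≠ 0 := by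
      intro h
      have : x ^ (n : ℕ) = 1 := by linear_combination -h
      have h2 : ‖x ^ (n : ℕ)‖ < 1 := by
        rw [norm_pow]; exact pow_lt_one₀ (norm_nonneg x) hx hn0
      rw [this, norm_one] at h2
      exact lt_irrefl _ h2
    rw [Complex.cpow_def_of_ne_zero hne]
    rfl
  exact hprodx.unique hprod3

end Main

/- Apostol's theorem (α = 1 case): if F(x) = ∏_{n∈A}(1-xⁿ)^{-f(n)/n} = ∑_{n≥0} p(n)xⁿ and
∑_{n∈A} (f(n)/n)xⁿ converge absolutely on |x| < 1, then
n·p(n) = ∑_{k=1}^n p(n-k)·f_A(k) with f_A(k) = ∑_{d∣k, d∈A} f(d). -/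
theorem stmt14 (A : Set ℕ) (hA : 0 ∉ A) (f : ℕ → ℂ) (p : ℕ → ℂ) (F : ℂ → ℂ)
    (hp0 : p 0 = 1)
    (hprod : ∀ x : ℂ, ‖x‖ < 1 →
      HasProd (fun n : A => (1 - x ^ (n : ℕ)) ^ (-(f n / ((n : ℕ) : ℂ)))) (F x))
    (hF : ∀ x : ℂ, ‖x‖ < 1 → HasSum (fun n : ℕ => p n * x ^ n) (F x))
    (hFabs : ∀ x : ℂ, ‖x‖ < 1 → Summable (fun n : ℕ => ‖p n * x ^ n‖))
    (hG : ∀ x : ℂ, ‖x‖ < 1 → Summable (fun n : A => ‖f n / ((n : ℕ) : ℂ) * x ^ (n : ℕ)‖)) :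
    ∀ n : ℕ, 1 ≤ n →
      (n : ℂ) * p n = ∑ k ∈ Finset.Icc 1 n, p (n - k) * ∑ d ∈ k.divisors, A.indicator f d := by
  have hFrep : HasFPowerSeriesOnBall F (ofScalars ℂ p) 0 1 := rep_of_hasSum hF hFabs
  have hck : ∀ x : ℂ, ‖x‖ < 1 → HasSum (fun k => cSeq A f k * x ^ k) (LFun A f x) :=
    fun x hx => hasSum_cSeq hA hx (hG x hx)
  have hcnorm : ∀ x : ℂ, ‖x‖ < 1 → Summable fun k => ‖cSeq A f k * x ^ k‖ :=
    fun x hx => summable_norm_cSeq hA hx (hG x hx)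
  have hLrep : HasFPowerSeriesOnBall (LFun A f) (ofScalars ℂ (cSeq A f)) 0 1 :=
    rep_of_hasSum hck hcnorm
  have hFe : ∀ x : ℂ, ‖x‖ < 1 → F x = Complex.exp (LFun A f x) :=
    fun x hx => F_eq_exp hA hx (hG x hx) (hprod x hx)
  have hder : ∀ x : ℂ, ‖x‖ < 1 → x * deriv F x = (x * deriv (LFun A f) x) * F x := by
    intro x hx
    have hdL : HasDerivAt (LFun A f) (deriv (LFun A f) x) x :=
      ((hLrep.analyticOnNhd x (memball.mpr hx)).differentiableAt).hasDerivAt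
    have hde : HasDerivAt (fun y => Complex.exp (LFun A f y))
        (Complex.exp (LFun A f x) * deriv (LFun A f) x) x := hdL.cexp
    have heq : F =ᶠ[nhds x] fun y => Complex.exp (LFun A f y) := by
      filter_upwards [EMetric.isOpen_ball.mem_nhds (memball.mpr hx)] with y hy
      exact hFe y (memball.mp hy)
    have hdF : HasDerivAt F (Complex.exp (LFun A f x) * deriv (LFun A f) x) x :=
      hde.congr_of_eventuallyEq heq
    rw [hdF.deriv, hFe x hx]; ring
  set d : ℕ → ℂ := fun n => ∑ k ∈ Finset.range (n + 1), (k : ℂ) * cSeq A f k * p (n - k)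
    with hd
  have hrearr : ∀ (x : ℂ) (n : ℕ),
      ∑ k ∈ Finset.range (n + 1), ((k : ℂ) * cSeq A f k * x ^ k) * (p (n - k) * x ^ (n - k))
        = d n * x ^ n := by
    intro x n
    rw [hd]
    simp only []
    rw [Finset.sum_mul]
    refine Finset.sum_congr rfl fun k hk => ?_
    have hkn : k ≤ n := Nat.lt_succ_iff.mp (Finset.mem_range.mp hk)
    calc ((k : ℂ) * cSeq A f k * x ^ k) * (p (n - k) * x ^ (n - k))
        = ((k : ℂ) * cSeq A f k * p (n - k)) * (x ^ k * x ^ (n - k)) := by ring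
      _ = (k : ℂ) * cSeq A f k * p (n - k) * x ^ n := by
          rw [← pow_add, Nat.add_sub_cancel' hkn]
  have rep1 : HasFPowerSeriesOnBall (fun x => x * deriv F x)
      (ofScalars ℂ (fun n => (n : ℂ) * p n)) 0 1 :=
    rep_of_hasSum (fun x hx => hasSum_mul_deriv hFrep hx)
      (fun x hx => summable_nmul hFabs hx)
  have rep2 : HasFPowerSeriesOnBall (fun x => x * deriv F x) (ofScalars ℂ d) 0 1 := by
    refine rep_of_hasSum (fun x hx => ?_) (fun x hx => ?_)
    · have hc1 : Summable fun k : ℕ => ‖(k : ℂ) * cSeq A f k * x ^ k‖ :=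
        summable_nmul hcnorm hx
      have hcau := hasSum_sum_range_mul_of_summable_norm hc1 (hFabs x hx)
      rw [(hasSum_mul_deriv hLrep hx).tsum_eq, (hF x hx).tsum_eq] at hcau
      show HasSum (fun n => d n * x ^ n) (x * deriv F x)
      rw [hder x hx]
      exact hcau.congr_fun fun n => (hrearr x n).symm
    · have hc1 : Summable fun k : ℕ => ‖(k : ℂ) * cSeq A f k * x ^ k‖ :=
        summable_nmul hcnorm hx
      have h9 := summable_norm_sum_mul_range_of_summable_norm hc1 (hFabs x hx)
      refine h9.congr fun n => ?_
      rw [hrearr x n]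
  have hcoeff : (fun n : ℕ => (n : ℂ) * p n) = d := coeff_unique rep1 rep2
  have hterm : ∀ k : ℕ, (k : ℂ) * cSeq A f k = ∑ e ∈ k.divisors, A.indicator f e := by
    intro k
    rcases Nat.eq_zero_or_pos k with rfl | hk
    · simp [cSeq]
    · rw [cSeq, mul_comm, div_mul_cancel₀ _ (Nat.cast_ne_zero.mpr hk.ne' : (k : ℂ) ≠ 0)]
  intro n hn
  have hsub2 : Finset.Icc 1 n ⊆ Finset.range (n + 1) := by
    intro k hk
    rw [Finset.mem_range, Nat.lt_succ_iff]
    exact (Finset.mem_Icc.mp hk).2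
  have h7 : (n : ℂ) * p n = d n := congrFun hcoeff n
  have h8 : d n = ∑ k ∈ Finset.Icc 1 n, p (n - k) * ∑ e ∈ k.divisors, A.indicator f e := by
    rw [hd]
    calc ∑ k ∈ Finset.range (n + 1), (k : ℂ) * cSeq A f k * p (n - k)
        = ∑ k ∈ Finset.range (n + 1), (∑ e ∈ k.divisors, A.indicator f e) * p (n - k) :=
          Finset.sum_congr rfl fun k _ => by rw [hterm k]
      _ = ∑ k ∈ Finset.Icc 1 n, (∑ e ∈ k.divisors, A.indicator f e) * p (n - k) := by
          refine (Finset.sum_subset hsub2 ?_).symm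
          intro k hk1 hk2
          have hk0 : k = 0 := by
            rw [Finset.mem_range, Nat.lt_succ_iff] at hk1
            rw [Finset.mem_Icc] at hk2
            omega
          subst hk0
          simp
      _ = ∑ k ∈ Finset.Icc 1 n, p (n - k) * ∑ e ∈ k.divisors, A.indicator f e :=
          Finset.sum_congr rfl fun k _ => mul_comm _ _
  rw [h7, h8]
end
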